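/- If K ∈ T_n and the labeling of Γ(K) uses fewer than n+1 of the p-colors, then the right-angled Artin group A_K is reducible, i.e., A_K ≅ Z × A_{K'} for some K' ∈ T_{n−1}. Conversely, if K has a vertex adjacent to all other vertices, then K is the cone on some K' ∈ T_{n−1} and A_K ≅ Z × A_{K'}. -/

import Mathlib

/-- `IsTn n S` : the finset `S` of `n`-simplices (each a finset of `n+1` vertices)
forms a complex in the class `𝒯ₙ`: the smallest class of `n`-dimensional complexes
containing the `n`-simplex and closed under gluing two members along an
`(n-1)`-simplex.  Equivalently, the complex is built by starting from one
`n`-simplex and repeatedly gluing a fresh `n`-simplex along an `(n-1)`-face of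
the complex built so far (the opposite vertex being new). -/
inductive IsTn {V : Type} [DecidableEq V] (n : ℕ) : Finset (Finset V) → Prop
  | single (s : Finset V) (h : s.card = n + 1) : IsTn n {s}
  | glue (S : Finset (Finset V)) (s f : Finset V) (v : V) :
      IsTn n S → s ∈ S → f ⊆ s → f.card = n → (∀ t ∈ S, v ∉ t) →
      IsTn n (insert (insert v f) S)

/-- The 1-skeleton of the complex with set of maximal simplices `S`. -/
def skeleton {V : Type} [DecidableEq V] (S : Finset (Finset V)) : SimpleGraph V where
  Adj v w := v ≠ w ∧ ∃ s ∈ S, v ∈ s ∧ w ∈ s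
  symm := by
    constructor
    rintro v w ⟨h, s, hs, hv, hw⟩
    exact ⟨Ne.symm h, s, hs, hw, hv⟩
  loopless := by constructor; rintro v ⟨h, -⟩; exact h rfl

/-- `f` is (the spine of) a piece of the complex `S`: an `(n-1)`-simplex which is a
face of at least two `n`-simplices. -/
def IsPiece {V : Type} [DecidableEq V] (S : Finset (Finset V)) (n : ℕ) (f : Finset V) : Prop :=
  f.card = n ∧ 2 ≤ (S.filter (fun s => f ⊆ s)).card

instance {V : Type} [DecidableEq V] (S : Finset (Finset V)) (n : ℕ) :
    DecidablePred (IsPiece S n) := fun f =>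
  decidable_of_iff (f.card = n ∧ 2 ≤ (S.filter (fun s => f ⊆ s)).card) Iff.rfl

/-- The commutator relations of a right-angled Artin group on a graph `G`. -/
def raagRels {V : Type} (G : SimpleGraph V) : Set (FreeGroup V) :=
  {r | ∃ v w, G.Adj v w ∧
    r = FreeGroup.of v * FreeGroup.of w * (FreeGroup.of v)⁻¹ * (FreeGroup.of w)⁻¹}

/-- The right-angled Artin group of a graph `G`: generators are vertices, with a
commuting relation for each pair of adjacent vertices. -/
abbrev RAAG {V : Type} (G : SimpleGraph V) : Type := PresentedGroup (raagRels G)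

/-- The right-angled Artin group `A_K` of the complex with maximal simplices `S`:
the RAAG on the 1-skeleton, with generators the vertices of the complex. -/
abbrev raagOfComplex {V : Type} [DecidableEq V] (S : Finset (Finset V)) : Type :=
  RAAG ((skeleton S).induce {v : V | v ∈ S.biUnion id})

theorem raag_commute_of_adj {V : Type} (G : SimpleGraph V) {u w : V} (h : G.Adj u w) :
    Commute (PresentedGroup.of u : RAAG G) (PresentedGroup.of w) := by
  rw [← commutatorElement_eq_one_iff_commute]
  have hmem : (FreeGroup.of u * FreeGroup.of w * (FreeGroup.of u)⁻¹ * (FreeGroup.of w)⁻¹)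
      ∈ Subgroup.normalClosure (raagRels G) :=
    Subgroup.subset_normalClosure ⟨u, w, h, rfl⟩
  have h1 : (PresentedGroup.mk (raagRels G))
      (FreeGroup.of u * FreeGroup.of w * (FreeGroup.of u)⁻¹ * (FreeGroup.of w)⁻¹) = 1 :=
    (QuotientGroup.eq_one_iff _).mpr hmem
  simpa [commutatorElement_def, PresentedGroup.of, map_mul, map_inv] using h1

theorem raag_commute_all {V : Type} {G : SimpleGraph V} {H : Type} [Group H]
    (ψ : RAAG G →* H) (c : H) (hc : ∀ v : V, Commute c (ψ (PresentedGroup.of v))) :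
    ∀ g : RAAG G, Commute c (ψ g) := by
  intro g
  have hmem : g ∈ (Subgroup.centralizer {c}).comap ψ := by
    refine PresentedGroup.generated_by _ _ (fun j => ?_) g
    exact Subgroup.mem_comap.mpr (Subgroup.mem_centralizer_iff.mpr
      (fun y hy => by rw [Set.mem_singleton_iff] at hy; subst hy; exact hc j))
  have := Subgroup.mem_centralizer_iff.mp (Subgroup.mem_comap.mp hmem) c rfl
  exact this

open scoped commutatorElement in
theorem cone_raag_iso {V : Type} [DecidableEq V] (G G' : SimpleGraph V)
    (X Y : Set V) (v₀ : V) (hv₀ : v₀ ∈ X) (hY : ∀ v, v ∈ Y ↔ v ∈ X ∧ v ≠ v₀)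
    (hGv : ∀ w ∈ Y, G.Adj v₀ w)
    (hadj : ∀ u ∈ Y, ∀ w ∈ Y, (G.Adj u w ↔ G'.Adj u w)) :
    Nonempty (RAAG (G.induce X) ≃* Multiplicative ℤ × RAAG (G'.induce Y)) := by
  classical
  set B := RAAG (G'.induce Y) with hB
  set A := RAAG (G.induce X) with hA
  -- the forward generator map
  set f : X → Multiplicative ℤ × B := fun a =>
    if h : (a : V) = v₀ then (Multiplicative.ofAdd 1, 1)
    else (1, PresentedGroup.of (⟨a, (hY a).mpr ⟨a.2, h⟩⟩ : Y)) with hf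
  have hfrel : ∀ r ∈ raagRels (G.induce X), FreeGroup.lift f r = 1 := by
    rintro r ⟨u, w, huw, rfl⟩
    have hGuw : G.Adj ↑u ↑w := huw
    have hcom : Commute (f u) (f w) := by
      by_cases hu : (u : V) = v₀ <;> by_cases hw : (w : V) = v₀
      · exact absurd (Subtype.ext (hu.trans hw.symm)) huw.ne
      · simp only [hf, dif_pos hu, dif_neg hw]
        simp [Commute, SemiconjBy, Prod.ext_iff, mul_comm]
      · simp only [hf, dif_neg hu, dif_pos hw]
        simp [Commute, SemiconjBy, Prod.ext_iff, mul_comm]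
      · simp only [hf, dif_neg hu, dif_neg hw]
        have hu' : (u : V) ∈ Y := (hY u).mpr ⟨u.2, hu⟩
        have hw' : (w : V) ∈ Y := (hY w).mpr ⟨w.2, hw⟩
        have hG' : G'.Adj ↑u ↑w := (hadj _ hu' _ hw').mp hGuw
        have := raag_commute_of_adj (G'.induce Y) (u := ⟨u, hu'⟩) (w := ⟨w, hw'⟩) hG'
        simpa [Commute, SemiconjBy, Prod.ext_iff] using this
    have : FreeGroup.lift f (FreeGroup.of u * FreeGroup.of w *
        (FreeGroup.of u)⁻¹ * (FreeGroup.of w)⁻¹) = ⁅f u, f w⁆ := by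
      simp [commutatorElement_def, map_mul, map_inv]
    rw [this]
    exact commutatorElement_eq_one_iff_commute.mpr hcom
  set φ : A →* Multiplicative ℤ × B := PresentedGroup.toGroup hfrel with hφ
  -- the backwards maps
  set c : A := PresentedGroup.of ⟨v₀, hv₀⟩ with hc
  set g : Y → A := fun b => PresentedGroup.of ⟨b, ((hY b).mp b.2).1⟩ with hg
  have hgrel : ∀ r ∈ raagRels (G'.induce Y), FreeGroup.lift g r = 1 := by
    rintro r ⟨u, w, huw, rfl⟩
    have hG : G.Adj ↑u ↑w := (hadj _ u.2 _ w.2).mpr huw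
    have hcom : Commute (g u) (g w) :=
      raag_commute_of_adj (G.induce X) (u := ⟨u, ((hY u).mp u.2).1⟩)
        (w := ⟨w, ((hY w).mp w.2).1⟩) hG
    have : FreeGroup.lift g (FreeGroup.of u * FreeGroup.of w *
        (FreeGroup.of u)⁻¹ * (FreeGroup.of w)⁻¹) = ⁅g u, g w⁆ := by
      simp [commutatorElement_def, map_mul, map_inv]
    rw [this]
    exact commutatorElement_eq_one_iff_commute.mpr hcom
  set ψ₂ : B →* A := PresentedGroup.toGroup hgrel with hψ₂
  have hcomm0 : ∀ b : B, Commute c (ψ₂ b) := by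
    refine raag_commute_all ψ₂ c (fun b => ?_)
    rw [hψ₂, PresentedGroup.toGroup.of]
    exact raag_commute_of_adj (G.induce X) (u := ⟨v₀, hv₀⟩) (hGv b b.2)
  set ψ : Multiplicative ℤ × B →* A :=
    (zpowersHom A c).noncommCoprod ψ₂ (fun z b => by rw [zpowersHom_apply]; exact (hcomm0 b).zpow_left z.toAdd) with hψ
  have hψ₂of : ∀ b : Y, ψ₂ (PresentedGroup.of b) = g b := fun b => PresentedGroup.toGroup.of hgrel
  have hφof : ∀ a : X, φ (PresentedGroup.of a) = f a := fun a => PresentedGroup.toGroup.of hfrel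
  have h₁ : ψ.comp φ = MonoidHom.id A := by
    refine PresentedGroup.ext fun x => ?_
    rw [MonoidHom.comp_apply, MonoidHom.id_apply, hφof]
    by_cases hx : (x : V) = v₀
    · rw [hf]; simp only [dif_pos hx]
      have hxx : x = (⟨v₀, hv₀⟩ : X) := Subtype.ext hx
      rw [hxx, hψ, MonoidHom.noncommCoprod_apply]
      simp [hc, zpowersHom_apply]
    · rw [hf]; simp only [dif_neg hx]
      rw [hψ, MonoidHom.noncommCoprod_apply]
      simp only [map_one, one_mul]
      rw [hψ₂of]
  have key2 : ∀ b : B, φ (ψ₂ b) = (1, b) := by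
    have : φ.comp ψ₂ = MonoidHom.inr (Multiplicative ℤ) B := by
      refine PresentedGroup.ext fun b => ?_
      rw [MonoidHom.comp_apply, hψ₂of, hg]
      rw [hφof]
      have hbv : ((b : V) : V) ≠ v₀ := ((hY b).mp b.2).2
      rw [hf]; simp only [dif_neg hbv]
      congr 1
    intro b
    have := congrArg (fun h => h b) (congrArg DFunLike.coe this)
    simpa using this
  have h₂ : φ.comp ψ = MonoidHom.id (Multiplicative ℤ × B) := by
    have hφc : φ c = (Multiplicative.ofAdd 1, 1) := by
      rw [hc, hφof, hf]; simp
    refine MonoidHom.ext fun zb => ?_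
    obtain ⟨z, b⟩ := zb
    rw [MonoidHom.comp_apply, MonoidHom.id_apply, hψ, MonoidHom.noncommCoprod_apply,
      map_mul, key2, zpowersHom_apply, map_zpow, hφc]
    ext
    · simp [← ofAdd_zsmul]
    · simp
  exact ⟨MonoidHom.toMulEquiv φ ψ h₁ h₂⟩

theorem isTn_card {V : Type} [DecidableEq V] {n : ℕ} {S : Finset (Finset V)} (hS : IsTn n S) :
    ∀ s ∈ S, s.card = n + 1 := by
  induction hS with
  | single s h => simpa
  | glue S s f v hS hsS hfs hf hfresh ih =>
    intro t ht
    rcases Finset.mem_insert.mp ht with rfl | ht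
    · rw [Finset.card_insert_of_notMem (fun hv => hfresh s hsS (hfs hv)), hf]
    · exact ih t ht

theorem isTn_nonempty {V : Type} [DecidableEq V] {n : ℕ} {S : Finset (Finset V)}
    (hS : IsTn n S) : S.Nonempty := by
  cases hS with
  | single s h => exact ⟨s, Finset.mem_singleton_self s⟩
  | glue S s f v hS hsS hfs hf hfresh => exact ⟨_, Finset.mem_insert_self _ _⟩

theorem isTn_erase {V : Type} [DecidableEq V] {n : ℕ} (hn : 1 ≤ n) {S : Finset (Finset V)}
    (hS : IsTn n S) (v₀ : V) :
    (∀ s ∈ S, v₀ ∈ s) → IsTn (n - 1) (S.image (fun s => s.erase v₀)) := by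
  induction hS with
  | single s h =>
    intro hv
    rw [Finset.image_singleton]
    exact IsTn.single _ (by
      rw [Finset.card_erase_of_mem (hv s (Finset.mem_singleton_self s)), h]; omega)
  | glue S s f v hS hsS hfs hf hfresh ih =>
    intro hv
    have hv₀S : ∀ t ∈ S, v₀ ∈ t := fun t ht => hv t (Finset.mem_insert_of_mem ht)
    have hvv₀ : v ≠ v₀ := fun h => hfresh s hsS (h ▸ hv₀S s hsS)
    have hv₀f : v₀ ∈ f := by
      have h1 : v₀ ∈ insert v f := hv _ (Finset.mem_insert_self _ _)
      exact (Finset.mem_insert.mp h1).resolve_left (Ne.symm hvv₀)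
    rw [Finset.image_insert, Finset.erase_insert_of_ne hvv₀]
    exact IsTn.glue _ (s.erase v₀) (f.erase v₀) v (ih hv₀S)
      (Finset.mem_image_of_mem _ hsS)
      (Finset.erase_subset_erase _ hfs)
      (by rw [Finset.card_erase_of_mem hv₀f, hf])
      (by
        rintro t ht
        obtain ⟨t', ht', rfl⟩ := Finset.mem_image.mp ht
        exact fun h => hfresh t' ht' (Finset.erase_subset _ _ h))

theorem cone_package {V : Type} [DecidableEq V] {n : ℕ} (hn : 1 ≤ n) {S : Finset (Finset V)}
    (hS : IsTn n S) (v₀ : V) (hv : ∀ s ∈ S, v₀ ∈ s) :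
    ∃ S' : Finset (Finset V), IsTn (n - 1) S' ∧ S = S'.image (insert v₀) ∧
      Nonempty (raagOfComplex S ≃* Multiplicative ℤ × raagOfComplex S') := by
  classical
  refine ⟨S.image (fun s => s.erase v₀), isTn_erase hn hS v₀ hv, ?_, ?_⟩
  · rw [Finset.image_image]
    conv_lhs => rw [← Finset.image_id (s := S)]
    exact (Finset.image_congr (fun s hs => (Finset.insert_erase (hv s hs)))).symm
  · set S' := S.image (fun s => s.erase v₀) with hS'
    have hmemY : ∀ w : V, w ∈ S'.biUnion id ↔ w ∈ S.biUnion id ∧ w ≠ v₀ := by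
      intro w
      simp only [Finset.mem_biUnion, id, hS', Finset.mem_image]
      constructor
      · rintro ⟨t, ⟨s, hs, rfl⟩, hw⟩
        exact ⟨⟨s, hs, Finset.erase_subset _ _ hw⟩, (Finset.mem_erase.mp hw).1⟩
      · rintro ⟨⟨s, hs, hw⟩, hne⟩
        exact ⟨s.erase v₀, ⟨s, hs, rfl⟩, Finset.mem_erase.mpr ⟨hne, hw⟩⟩
    obtain ⟨s₀, hs₀⟩ := isTn_nonempty hS
    refine cone_raag_iso (skeleton S) (skeleton S') _ _ v₀
      (by simpa using Finset.mem_biUnion.mpr ⟨s₀, hs₀, hv s₀ hs₀⟩)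
      (fun w => by simpa using hmemY w) ?_ ?_
    · intro w hw
      simp only [Set.mem_setOf_eq] at hw
      obtain ⟨hwS, hne⟩ := (hmemY w).mp hw
      obtain ⟨s, hs, hws⟩ := Finset.mem_biUnion.mp hwS
      exact ⟨Ne.symm hne, s, hs, hv s hs, hws⟩
    · intro u hu w hw
      simp only [Set.mem_setOf_eq] at hu hw
      obtain ⟨huS, hune⟩ := (hmemY u).mp hu
      obtain ⟨hwS, hwne⟩ := (hmemY w).mp hw
      constructor
      · rintro ⟨hne, s, hs, h1, h2⟩
        exact ⟨hne, s.erase v₀, Finset.mem_image_of_mem _ hs,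
          Finset.mem_erase.mpr ⟨hune, h1⟩, Finset.mem_erase.mpr ⟨hwne, h2⟩⟩
      · rintro ⟨hne, t, ht, h1, h2⟩
        obtain ⟨s, hs, rfl⟩ := Finset.mem_image.mp ht
        exact ⟨hne, s, hs, Finset.erase_subset _ _ h1, Finset.erase_subset _ _ h2⟩

theorem mem_all_of_cone {V : Type} [DecidableEq V] {n : ℕ} {S : Finset (Finset V)}
    (hS : IsTn n S) (v₀ : V) :
    v₀ ∈ S.biUnion id → (∀ w ∈ S.biUnion id, w ≠ v₀ → (skeleton S).Adj v₀ w) →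
    ∀ s ∈ S, v₀ ∈ s := by
  induction hS with
  | single s h =>
    intro hv₀ _ t ht
    rw [Finset.mem_singleton] at ht
    subst ht
    simpa using hv₀
  | glue S s f v hS hsS hfs hf hfresh ih =>
    intro hv₀ hadj
    have hsne : s.Nonempty := Finset.card_pos.mp (by rw [isTn_card hS s hsS]; omega)
    -- v₀ is not the fresh vertex v
    have hvne : v₀ ≠ v := by
      rintro rfl
      have hsub : s ⊆ f := by
        intro w hw
        have hwv : w ≠ v₀ := fun h => hfresh s hsS (h ▸ hw)
        obtain ⟨hne, t', ht', hv₀t, hwt⟩ :=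
          hadj w (Finset.mem_biUnion.mpr ⟨s, Finset.mem_insert_of_mem hsS, hw⟩) hwv
        rcases Finset.mem_insert.mp ht' with rfl | ht'
        · exact (Finset.mem_insert.mp hwt).resolve_left hwv
        · exact absurd hv₀t (hfresh t' ht')
      have hcard := Finset.card_le_card hsub
      rw [isTn_card hS s hsS, hf] at hcard
      omega
    -- v₀ is a vertex of S
    have hv₀S : v₀ ∈ S.biUnion id := by
      rcases Finset.mem_biUnion.mp hv₀ with ⟨t', ht', hv₀t⟩
      rcases Finset.mem_insert.mp ht' with rfl | ht'
      · exact Finset.mem_biUnion.mpr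
          ⟨s, hsS, hfs ((Finset.mem_insert.mp hv₀t).resolve_left hvne)⟩
      · exact Finset.mem_biUnion.mpr ⟨t', ht', hv₀t⟩
    -- the cone condition descends to S
    have hadjS : ∀ w ∈ S.biUnion id, w ≠ v₀ → (skeleton S).Adj v₀ w := by
      intro w hw hwv
      obtain ⟨s', hs', hws'⟩ := Finset.mem_biUnion.mp hw
      obtain ⟨hne, t', ht', h1, h2⟩ :=
        hadj w (Finset.mem_biUnion.mpr ⟨s', Finset.mem_insert_of_mem hs', hws'⟩) hwv
      rcases Finset.mem_insert.mp ht' with rfl | ht'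
      · have hwv' : w ≠ v := fun h => hfresh s' hs' (h ▸ hws')
        exact ⟨hne, s, hsS, hfs ((Finset.mem_insert.mp h1).resolve_left hvne),
          hfs ((Finset.mem_insert.mp h2).resolve_left hwv')⟩
      · exact ⟨hne, t', ht', h1, h2⟩
    have hall := ih hv₀S hadjS
    intro t ht
    rcases Finset.mem_insert.mp ht with rfl | ht
    · -- show v₀ ∈ insert v f using adjacency to the fresh vertex v
      have hv_mem : v ∈ (insert (insert v f) S).biUnion id :=
        Finset.mem_biUnion.mpr ⟨insert v f, Finset.mem_insert_self _ _,
          Finset.mem_insert_self v f⟩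
      obtain ⟨hne, t', ht', h1, h2⟩ := hadj v hv_mem (Ne.symm hvne)
      rcases Finset.mem_insert.mp ht' with rfl | ht'
      · exact h1
      · exact absurd h2 (hfresh t' ht')
    · exact hall t ht

theorem common_vertex {V : Type} [DecidableEq V] {n : ℕ} {S : Finset (Finset V)}
    (hS : IsTn n S) (ℓ : V → Fin (n + 1)) (i : Fin (n + 1)) :
    (∀ s ∈ S, Set.InjOn ℓ ↑s) →
    (∀ s ∈ S, ∀ f ⊆ s, IsPiece S n f → ∀ v ∈ s, v ∉ f → ℓ v ≠ i) →
    ∃ v₀, (∀ s ∈ S, v₀ ∈ s) ∧ ℓ v₀ = i := by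
  induction hS with
  | single s h =>
    intro hinj _
    have himg : s.image ℓ = Finset.univ := Finset.eq_univ_of_card _ (by
      rw [Finset.card_image_of_injOn (hinj s (Finset.mem_singleton_self s)), h,
        Fintype.card_fin])
    obtain ⟨v₀, hv₀, hℓv₀⟩ := Finset.mem_image.mp (himg ▸ Finset.mem_univ i)
    exact ⟨v₀, fun t ht => by rw [Finset.mem_singleton] at ht; subst ht; exact hv₀, hℓv₀⟩
  | glue S s f v hS hsS hfs hf hfresh ih =>
    intro hinj hpieces
    have hinjS : ∀ t ∈ S, Set.InjOn ℓ ↑t := fun t ht => hinj t (Finset.mem_insert_of_mem ht)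
    have hpieceS : ∀ t ∈ S, ∀ f' ⊆ t, IsPiece S n f' → ∀ w ∈ t, w ∉ f' → ℓ w ≠ i := by
      intro t ht f' hf' hp w hw hwf'
      refine hpieces t (Finset.mem_insert_of_mem ht) f' hf' ⟨hp.1, le_trans hp.2 ?_⟩ w hw hwf'
      exact Finset.card_le_card
        (Finset.filter_subset_filter _ (Finset.subset_insert _ _))
    obtain ⟨v₀, hall, hℓv₀⟩ := ih hinjS hpieceS
    have hne : insert v f ≠ s := fun h => hfresh s hsS (h ▸ Finset.mem_insert_self v f)
    have hpiece : IsPiece (insert (insert v f) S) n f := by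
      refine ⟨hf, ?_⟩
      have hsub : ({insert v f, s} : Finset (Finset V)) ⊆
          (insert (insert v f) S).filter (fun t => f ⊆ t) := by
        intro t ht
        rcases Finset.mem_insert.mp ht with rfl | ht
        · exact Finset.mem_filter.mpr ⟨Finset.mem_insert_self _ _, Finset.subset_insert _ _⟩
        · rw [Finset.mem_singleton] at ht; subst ht
          exact Finset.mem_filter.mpr ⟨Finset.mem_insert_of_mem hsS, hfs⟩
      calc 2 = ({insert v f, s} : Finset (Finset V)).card := (Finset.card_pair hne).symm
        _ ≤ _ := Finset.card_le_card hsub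
    have hv₀f : v₀ ∈ f := by
      by_contra h
      exact hpieces s (Finset.mem_insert_of_mem hsS) f hfs hpiece v₀ (hall s hsS) h hℓv₀
    refine ⟨v₀, fun t ht => ?_, hℓv₀⟩
    rcases Finset.mem_insert.mp ht with rfl | ht
    · exact Finset.mem_insert_of_mem hv₀f
    · exact hall t ht

/-- (1) if `K ∈ 𝒯ₙ` and the labeling uses fewer than `n+1` of the
p-colors (some color `i` is never the off-spine color of a piece), then `A_K` is
reducible: `A_K ≅ ℤ × A_{K'}` for some `K' ∈ 𝒯ₙ₋₁`; (2) conversely, if `K` has a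
vertex adjacent to all other vertices, then `K` is the cone on some `K' ∈ 𝒯ₙ₋₁` and
`A_K ≅ ℤ × A_{K'}`. -/
theorem reducible_iff_missing_color {V : Type} [DecidableEq V] {n : ℕ} (hn : 1 ≤ n)
    {S : Finset (Finset V)} (hS : IsTn n S)
    (ℓ : V → Fin (n + 1)) (hℓ : ∀ s ∈ S, Set.InjOn ℓ ↑s) :
    ((∃ i : Fin (n + 1), ∀ s ∈ S, ∀ f ⊆ s, IsPiece S n f →
        ∀ v ∈ s, v ∉ f → ℓ v ≠ i) →
      ∃ (W : Type) (_ : DecidableEq W) (S' : Finset (Finset W)), IsTn (n - 1) S' ∧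
        Nonempty (raagOfComplex S ≃* Multiplicative ℤ × raagOfComplex S')) ∧
    (∀ v₀ ∈ S.biUnion id, (∀ w ∈ S.biUnion id, w ≠ v₀ → (skeleton S).Adj v₀ w) →
      ∃ S' : Finset (Finset V), IsTn (n - 1) S' ∧ S = S'.image (insert v₀) ∧
        Nonempty (raagOfComplex S ≃* Multiplicative ℤ × raagOfComplex S')) := by
  constructor
  · rintro ⟨i, hi⟩
    obtain ⟨v₀, hall, -⟩ := common_vertex hS ℓ i hℓ hi
    have h := cone_package hn hS v₀ hall
    obtain ⟨S', h1, -, h3⟩ := h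
    refine ⟨V, inferInstance, S', h1, h3⟩
  · intro v₀ hv₀ hadj
    exact cone_package hn hS v₀ (mem_all_of_cone hS v₀ hv₀ hadj)
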